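/- For a finite simple graph without isolated vertices, for p ≥ 1 and λ ∈ ℝ let Ŝ_λ(Δ_p) = { x ∈ ℝ^n : ‖x‖_∞ = 1 and (λ,x) is an eigenpair of Δ_p }. The set-valued map (p,λ) ↦ Ŝ_λ(Δ_p) is upper semi-continuous on [1,∞)×[0,∞): for every (p,λ) ∈ [1,∞)×[0,∞) and every ε > 0 there exists δ > 0 such that whenever p' ≥ 1, λ' ≥ 0, |p'−p| < δ and |λ'−λ| < δ, every point of Ŝ_{λ'}(Δ_{p'}) has Euclidean distance less than ε from some point of Ŝ_λ(Δ_p) (in particular, if Ŝ_λ(Δ_p) is empty then Ŝ_{λ'}(Δ_{p'}) is empty for all such (p',λ')). -/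

import Mathlib

open scoped BigOperators Pointwise NNReal Classical

noncomputable section

/-! ### The graph `p`-Laplacian: Rayleigh quotients, genus, variational eigenvalues -/

/-- `Σ_{{i,j}∈E} |x_i − x_j|^p` (each unordered edge counted once). -/
def TVp {n : ℕ} (G : SimpleGraph (Fin n)) [DecidableRel G.Adj] (p : ℝ) (x : Fin n → ℝ) : ℝ :=
  (∑ i : Fin n, ∑ j : Fin n, if G.Adj i j then |x i - x j| ^ p else 0) / 2

/-- `Σ_{i∈V} deg(i)·|x_i|^p`. -/
def Np {n : ℕ} (G : SimpleGraph (Fin n)) [DecidableRel G.Adj] (p : ℝ) (x : Fin n → ℝ) : ℝ :=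
  ∑ i : Fin n, (G.degree i : ℝ) * |x i| ^ p

/-- The `p`-Rayleigh quotient `F_p`. -/
def Fp {n : ℕ} (G : SimpleGraph (Fin n)) [DecidableRel G.Adj] (p : ℝ) (x : Fin n → ℝ) : ℝ :=
  TVp G p x / Np G p x

/-- A set is (centrally) symmetric if `S = -S`. -/
def SymmSet {n : ℕ} (S : Set (Fin n → ℝ)) : Prop := ∀ x ∈ S, -x ∈ S

/-- There is a continuous odd map from `S` to the unit sphere `𝕊^{k-1} ⊂ ℝ^k`. -/
def HasOddMapToSphere {n : ℕ} (S : Set (Fin n → ℝ)) (k : ℕ) : Prop :=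
  ∃ φ : (Fin n → ℝ) → EuclideanSpace ℝ (Fin k),
    ContinuousOn φ S ∧ (∀ x ∈ S, ‖φ x‖ = 1) ∧ ∀ x ∈ S, φ (-x) = -φ x

/-- There is a continuous odd map from the unit sphere `𝕊^{k-1} ⊂ ℝ^k` to `S`. -/
def HasOddMapFromSphere {n : ℕ} (S : Set (Fin n → ℝ)) (k : ℕ) : Prop :=
  ∃ φ : EuclideanSpace ℝ (Fin k) → (Fin n → ℝ),
    ContinuousOn φ (Metric.sphere (0 : EuclideanSpace ℝ (Fin k)) 1) ∧
    (∀ x ∈ Metric.sphere (0 : EuclideanSpace ℝ (Fin k)) 1, φ x ∈ S) ∧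
    ∀ x ∈ Metric.sphere (0 : EuclideanSpace ℝ (Fin k)) 1, φ (-x) = -φ x

/-- The Krasnoselskii genus `γ⁻`. -/
def genNeg {n : ℕ} (S : Set (Fin n → ℝ)) : ℕ :=
  if S.Nonempty ∧ SymmSet S then sInf {k | 1 ≤ k ∧ HasOddMapToSphere S k} else 0

/-- The index `γ⁺`. -/
def genPos {n : ℕ} (S : Set (Fin n → ℝ)) : ℕ :=
  if S.Nonempty ∧ SymmSet S then sSup {k | 1 ≤ k ∧ HasOddMapFromSphere S k} else 0

/-- Admissible sets for the min-max principle: symmetric compact subsets of `ℝ^n∖{0}`. -/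
def Admissible {n : ℕ} (S : Set (Fin n → ℝ)) : Prop :=
  IsCompact S ∧ (0 : Fin n → ℝ) ∉ S ∧ SymmSet S

/-- The variational eigenvalues `λ_k⁻(Δ_p)`. -/
def lamNeg {n : ℕ} (G : SimpleGraph (Fin n)) [DecidableRel G.Adj] (p : ℝ) (k : ℕ) : ℝ :=
  sInf {r | ∃ S : Set (Fin n → ℝ), Admissible S ∧ k ≤ genNeg S ∧ r = sSup (Fp G p '' S)}

/-- The min-max eigenvalues `λ_k⁺(Δ_p)`. -/
def lamPos {n : ℕ} (G : SimpleGraph (Fin n)) [DecidableRel G.Adj] (p : ℝ) (k : ℕ) : ℝ :=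
  sInf {r | ∃ S : Set (Fin n → ℝ), Admissible S ∧ k ≤ genPos S ∧ r = sSup (Fp G p '' S)}

/-! ### Eigenpairs of `Δ_p` -/

/-- The set-valued sign: `Sgn(t) = {1}` if `t>0`, `[-1,1]` if `t=0`, `{-1}` if `t<0`. -/
def Sgn (t : ℝ) : Set ℝ := if 0 < t then {1} else if t < 0 then {-1} else Set.Icc (-1) 1

/-- Eigenpairs of the graph `p`-Laplacian for `p > 1`.  (Note that for `t = 0` the
expression `|t|^(p-2) * t` equals `0`, matching the convention `|t|^{p-2}t = 0`.) -/
def IsEigenpairP {n : ℕ} (G : SimpleGraph (Fin n)) [DecidableRel G.Adj] (p lam : ℝ)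
    (x : Fin n → ℝ) : Prop :=
  x ≠ 0 ∧ ∀ i, (∑ j : Fin n, if G.Adj i j then |x i - x j| ^ (p - 2) * (x i - x j) else 0) =
    lam * (G.degree i : ℝ) * (|x i| ^ (p - 2) * x i)

/-- Eigenpairs of the graph `1`-Laplacian. -/
def IsEigenpair1 {n : ℕ} (G : SimpleGraph (Fin n)) [DecidableRel G.Adj] (lam : ℝ)
    (x : Fin n → ℝ) : Prop :=
  x ≠ 0 ∧ ∃ z : Fin n → Fin n → ℝ,
    (∀ i j, G.Adj i j → z i j ∈ Sgn (x i - x j)) ∧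
    (∀ i j, G.Adj i j → z i j = -z j i) ∧
    ∀ i, (∑ j : Fin n, if G.Adj i j then z i j else 0) ∈
      (fun s => lam * (G.degree i : ℝ) * s) '' Sgn (x i)

/-- Eigenpairs of `Δ_p` for `p ≥ 1` (with the `1`-Laplacian convention at `p = 1`). -/
def IsEigenpair {n : ℕ} (G : SimpleGraph (Fin n)) [DecidableRel G.Adj] (p lam : ℝ)
    (x : Fin n → ℝ) : Prop :=
  (p = 1 ∧ IsEigenpair1 G lam x) ∨ (1 < p ∧ IsEigenpairP G p lam x)

/-! ### Cheeger constants -/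

/-- `|∂A|`: the number of edges with exactly one endpoint in `A`. -/
def eBoundary {n : ℕ} (G : SimpleGraph (Fin n)) [DecidableRel G.Adj] (A : Finset (Fin n)) : ℕ :=
  ∑ i ∈ A, ∑ j ∈ Aᶜ, if G.Adj i j then 1 else 0

/-- `vol(A) = Σ_{i∈A} deg(i)`. -/
def volG {n : ℕ} (G : SimpleGraph (Fin n)) [DecidableRel G.Adj] (A : Finset (Fin n)) : ℕ :=
  ∑ i ∈ A, G.degree i

/-- The multi-way Cheeger constants `h_k`. -/
def cheeger {n : ℕ} (G : SimpleGraph (Fin n)) [DecidableRel G.Adj] (k : ℕ) : ℝ :=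
  sInf {r | ∃ A : Fin k → Finset (Fin n), (∀ i, (A i).Nonempty) ∧
    (∀ i j, i ≠ j → Disjoint (A i) (A j)) ∧
    r = ⨆ i, (eBoundary G (A i) : ℝ) / (volG G (A i) : ℝ)}
/-! ### The map Φ -/

/-- `Φ_c(x)_i = |x_i|^c · sign(x_i)`. -/
def Phi {n : ℕ} (c : ℝ) (x : Fin n → ℝ) : Fin n → ℝ := fun i => |x i| ^ c * Real.sign (x i)

/-! ### The simplicial complex `K_n` and the modified Cheeger constants -/

/-- The vector `1_A - 1_B`. -/
def charVec {n : ℕ} (A B : Finset (Fin n)) : Fin n → ℝ :=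
  fun i => if i ∈ A then 1 else if i ∈ B then -1 else 0

/-- The inclusion order on pairs of sets: `(A,B) ≺ (A',B')` iff `A ⊆ A'` and `B ⊆ B'`. -/
def pairLE {n : ℕ} (a b : Finset (Fin n) × Finset (Fin n)) : Prop := a.1 ⊆ b.1 ∧ a.2 ⊆ b.2

/-- The geometric realization `|K(𝒜)|`: the union over all chains of elements of `𝒜` of the
convex hulls of the corresponding vectors `1_A - 1_B`. -/
def geomComplex {n : ℕ} (𝒜 : Set (Finset (Fin n) × Finset (Fin n))) : Set (Fin n → ℝ) :=
  ⋃ (C : Set (Finset (Fin n) × Finset (Fin n))) (_ : C ⊆ 𝒜) (_ : IsChain pairLE C),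
    convexHull ℝ ((fun ab => charVec ab.1 ab.2) '' C)

/-- The modified combinatorial `k`-way Cheeger constant `ĥ_k⁻`. -/
def hHatNeg {n : ℕ} (G : SimpleGraph (Fin n)) [DecidableRel G.Adj] (k : ℕ) : ℝ :=
  sInf {r | ∃ 𝒜 : Set (Finset (Fin n) × Finset (Fin n)),
    (∀ ab ∈ 𝒜, Disjoint ab.1 ab.2 ∧ (ab.1 ∪ ab.2).Nonempty) ∧
    k ≤ genNeg (geomComplex 𝒜) ∧
    r = sSup ((fun ab : Finset (Fin n) × Finset (Fin n) =>
      ((eBoundary G ab.1 : ℝ) + (eBoundary G ab.2 : ℝ)) / (volG G (ab.1 ∪ ab.2) : ℝ)) '' 𝒜)}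

/-! ### Subpartitions into cliques and the pseudo-independence number -/

/-- `c(V_i) = 1` if `|V_i| ≤ 2` and `c(V_i) = 2` if `|V_i| ≥ 3`. -/
def cOf {n : ℕ} (A : Finset (Fin n)) : ℕ := if A.card ≤ 2 then 1 else 2

/-- A subpartition of `V` into sets each inducing a complete subgraph of `G`. -/
def IsCliqueSubpartition {n : ℕ} (G : SimpleGraph (Fin n)) (P : Finset (Finset (Fin n))) : Prop :=
  (∀ A ∈ P, A.Nonempty ∧ G.IsClique (A : Set (Fin n))) ∧
    ∀ A ∈ P, ∀ B ∈ P, A ≠ B → Disjoint A B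

/-- The members of `P` are pairwise non-adjacent: every edge of `G` meets at most one of them. -/
def PairwiseNonAdjacent {n : ℕ} (G : SimpleGraph (Fin n)) (P : Finset (Finset (Fin n))) : Prop :=
  ∀ i j, G.Adj i j → ∀ A ∈ P, ∀ B ∈ P, (i ∈ A ∨ j ∈ A) → (i ∈ B ∨ j ∈ B) → A = B

/-- The pseudo-independence number `α_*(G)`. -/
def pseudoIndepNum {n : ℕ} (G : SimpleGraph (Fin n)) : ℕ :=
  sSup {m | ∃ P : Finset (Finset (Fin n)), IsCliqueSubpartition G P ∧
    PairwiseNonAdjacent G P ∧ m = ∑ A ∈ P, cOf A}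

/-- `h_*(P)`. -/
def hStar {n : ℕ} (G : SimpleGraph (Fin n)) [DecidableRel G.Adj]
    (P : Finset (Finset (Fin n))) : ℝ :=
  sInf {r | ∃ A : Finset (Fin n), A.Nonempty ∧ (∀ v ∈ A, ∃ W ∈ P, v ∈ W) ∧
    (∀ W ∈ P, (A ∩ W).card ≤ 1) ∧ r = (eBoundary G A : ℝ) / (volG G A : ℝ)}

/-! ### The set-valued 1-Laplacian and the p-Laplacian operator -/

/-- The set `Δ_1 x`. -/
def Delta1Set {n : ℕ} (G : SimpleGraph (Fin n)) [DecidableRel G.Adj] (x : Fin n → ℝ) :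
    Set (Fin n → ℝ) :=
  {v | ∃ z : Fin n → Fin n → ℝ,
    (∀ i j, G.Adj i j → z i j ∈ Sgn (x i - x j)) ∧
    (∀ i j, G.Adj i j → z i j = -z j i) ∧
    v = fun i => ∑ j : Fin n, if G.Adj i j then z i j else 0}

/-- The `p`-Laplacian `Δ_p x` for `p > 1`. -/
def DeltaP {n : ℕ} (G : SimpleGraph (Fin n)) [DecidableRel G.Adj] (p : ℝ) (x : Fin n → ℝ) :
    Fin n → ℝ :=
  fun i => ∑ j : Fin n, if G.Adj i j then |x i - x j| ^ (p - 2) * (x i - x j) else 0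

/-- The normalized eigenspace `Ŝ_λ(Δ_p)`. -/
def hatS {n : ℕ} (G : SimpleGraph (Fin n)) [DecidableRel G.Adj] (p lam : ℝ) :
    Set (Fin n → ℝ) :=
  {x | ‖x‖ = 1 ∧ IsEigenpair G p lam x}

open Filter Topology

private lemma tendsto_rpow_aux {a b : ℕ → ℝ} {x y : ℝ} (hx : x ≠ 0 ∨ 0 < y)
    (ha : Tendsto a atTop (𝓝 x)) (hb : Tendsto b atTop (𝓝 y)) :
    Tendsto (fun k => a k ^ b k) atTop (𝓝 (x ^ y)) :=
  (Real.continuousAt_rpow (x, y) hx).tendsto.comp (ha.prodMk_nhds hb)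

private lemma abs_phi_le {t e M : ℝ} (ht : |t| ≤ M) (he : 0 ≤ e - 1) :
    abs (|t| ^ (e - 2) * t) ≤ M ^ (e - 1) := by
  rcases eq_or_ne t 0 with rfl | h
  · simpa using Real.rpow_nonneg (le_trans (abs_nonneg (0:ℝ)) ht) _
  · have h0 : 0 < |t| := abs_pos.2 h
    have heq : abs (|t| ^ (e - 2) * t) = |t| ^ (e - 1) := by
      rw [abs_mul, abs_of_nonneg (Real.rpow_nonneg (abs_nonneg t) _),
        show e - 1 = (e - 2) + 1 by ring, Real.rpow_add_one h0.ne']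
    rw [heq]
    exact Real.rpow_le_rpow (abs_nonneg t) ht he

private lemma tendsto_phi {q : ℝ} (hq : 1 < q) {qk tk : ℕ → ℝ} {t : ℝ}
    (hqk : Tendsto qk atTop (𝓝 q)) (htk : Tendsto tk atTop (𝓝 t)) :
    Tendsto (fun k => |tk k| ^ (qk k - 2) * tk k) atTop (𝓝 (|t| ^ (q - 2) * t)) := by
  rcases eq_or_ne t 0 with rfl | h
  · have h0 : (|(0:ℝ)| ^ (q - 2) * 0) = 0 := by simp
    rw [h0]
    have hg : Tendsto (fun k => |tk k| ^ (qk k - 1)) atTop (𝓝 0) := by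
      have := tendsto_rpow_aux (Or.inr (by linarith : (0:ℝ) < q - 1)) htk.abs
        (hqk.sub tendsto_const_nhds)
      simpa [Real.zero_rpow (show q - 1 ≠ 0 by linarith)] using this
    apply squeeze_zero_norm' ?_ hg
    filter_upwards [hqk.eventually (eventually_gt_nhds hq)] with k hk
    rw [Real.norm_eq_abs]
    exact abs_phi_le (le_refl _) (by linarith)
  · exact (tendsto_rpow_aux (Or.inl (abs_ne_zero.2 h)) htk.abs
      (hqk.sub tendsto_const_nhds)).mul htk

private lemma Sgn_subset (t : ℝ) : Sgn t ⊆ Set.Icc (-1) 1 := by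
  intro x hx
  unfold Sgn at hx
  split_ifs at hx with h1 h2
  · simp only [Set.mem_singleton_iff] at hx; constructor <;> simp [hx]
  · simp only [Set.mem_singleton_iff] at hx; constructor <;> simp [hx]
  · exact hx

private lemma mem_Sgn_limit {ak bk : ℕ → ℝ} {a b : ℝ}
    (ha : Tendsto ak atTop (𝓝 a)) (hb : Tendsto bk atTop (𝓝 b))
    (h : ∀ k, ak k ∈ Sgn (bk k)) : a ∈ Sgn b := by
  rcases lt_trichotomy 0 b with hb0 | hb0 | hb0
  · have hev : ak =ᶠ[atTop] (fun _ => (1:ℝ)) := by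
      filter_upwards [hb.eventually (eventually_gt_nhds hb0)] with k hk
      have := h k; simpa [Sgn, hk] using this
    have h1 : a = 1 := tendsto_nhds_unique ((tendsto_congr' hev).mp ha) tendsto_const_nhds
    simp [Sgn, hb0, h1]
  · have h1 : -1 ≤ a := ge_of_tendsto' ha fun k => (Sgn_subset _ (h k)).1
    have h2 : a ≤ 1 := le_of_tendsto' ha fun k => (Sgn_subset _ (h k)).2
    simp [Sgn, ← hb0, h1, h2]
  · have hev : ak =ᶠ[atTop] (fun _ => (-1:ℝ)) := by
      filter_upwards [hb.eventually (eventually_lt_nhds hb0)] with k hk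
      have := h k; simpa [Sgn, hk, not_lt_of_gt hk] using this
    have h1 : a = -1 := tendsto_nhds_unique ((tendsto_congr' hev).mp ha) tendsto_const_nhds
    simp [Sgn, hb0, not_lt_of_gt hb0, h1]

private lemma mem_Sgn_of_tendsto {qk tk zk : ℕ → ℝ} {t z : ℝ}
    (hq1 : ∀ k, 1 < qk k) (hq : Tendsto qk atTop (𝓝 1))
    (ht : Tendsto tk atTop (𝓝 t)) (hbd : ∀ k, |tk k| ≤ 2)
    (hzk : ∀ k, zk k = |tk k| ^ (qk k - 2) * tk k)
    (hz : Tendsto zk atTop (𝓝 z)) : z ∈ Sgn t := by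
  have hqe : Tendsto (fun k => qk k - 2) atTop (𝓝 (1 - 2)) := hq.sub tendsto_const_nhds
  rcases lt_trichotomy 0 t with ht0 | ht0 | ht0
  · have habs : |t| ≠ 0 := by positivity
    have h1 : Tendsto zk atTop (𝓝 (|t| ^ ((1:ℝ) - 2) * t)) := by
      refine Tendsto.congr (fun k => (hzk k).symm) ?_
      exact (tendsto_rpow_aux (Or.inl habs) ht.abs hqe).mul ht
    have h2 : |t| ^ ((1:ℝ) - 2) * t = 1 := by
      rw [abs_of_pos ht0, show (1:ℝ) - 2 = -1 by norm_num, Real.rpow_neg_one]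
      field_simp
    have := tendsto_nhds_unique hz (h2 ▸ h1)
    simp [Sgn, ht0, this]
  · have hb : ∀ k, |zk k| ≤ (2:ℝ) ^ (qk k - 1) := fun k => by
      rw [hzk k]; exact abs_phi_le (hbd k) (by linarith [hq1 k])
    have hg : Tendsto (fun k => (2:ℝ) ^ (qk k - 1)) atTop (𝓝 ((2:ℝ) ^ ((1:ℝ) - 1))) :=
      tendsto_rpow_aux (Or.inl (by norm_num : (2:ℝ) ≠ 0)) tendsto_const_nhds
        (hq.sub tendsto_const_nhds)
    rw [show (1:ℝ) - 1 = 0 by norm_num, Real.rpow_zero] at hg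
    have habs : |z| ≤ 1 := le_of_tendsto_of_tendsto' hz.abs hg hb
    have := abs_le.mp habs
    simp [Sgn, ← ht0, this.1, this.2]
  · have habs : |t| ≠ 0 := by simp [abs_ne_zero]; exact ne_of_lt ht0
    have h1 : Tendsto zk atTop (𝓝 (|t| ^ ((1:ℝ) - 2) * t)) := by
      refine Tendsto.congr (fun k => (hzk k).symm) ?_
      exact (tendsto_rpow_aux (Or.inl habs) ht.abs hqe).mul ht
    have h2 : |t| ^ ((1:ℝ) - 2) * t = -1 := by
      rw [abs_of_neg ht0, show (1:ℝ) - 2 = -1 by norm_num, Real.rpow_neg_one]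
      field_simp
      rw [div_self (ne_of_lt ht0)]
    have := tendsto_nhds_unique hz (h2 ▸ h1)
    simp [Sgn, ht0, not_lt_of_gt ht0, this]

private lemma eigP_limit {n : ℕ} (G : SimpleGraph (Fin n)) [DecidableRel G.Adj]
    {p lam : ℝ} (hp : 1 < p)
    {pk lk : ℕ → ℝ} {yk : ℕ → Fin n → ℝ} {y : Fin n → ℝ}
    (hpt : Tendsto pk atTop (𝓝 p)) (hlt : Tendsto lk atTop (𝓝 lam))
    (hyt : Tendsto yk atTop (𝓝 y)) (hy0 : y ≠ 0)
    (heig : ∀ᶠ k in atTop, IsEigenpairP G (pk k) (lk k) (yk k)) :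
    IsEigenpairP G p lam y := by
  refine ⟨hy0, fun i => ?_⟩
  have hyi : ∀ j, Tendsto (fun k => yk k j) atTop (𝓝 (y j)) :=
    fun j => tendsto_pi_nhds.1 hyt j
  have hL : Tendsto (fun k => ∑ j : Fin n,
      if G.Adj i j then |yk k i - yk k j| ^ (pk k - 2) * (yk k i - yk k j) else 0) atTop
      (𝓝 (∑ j : Fin n, if G.Adj i j then |y i - y j| ^ (p - 2) * (y i - y j) else 0)) := by
    apply tendsto_finset_sum
    intro j _
    by_cases hadj : G.Adj i j
    · simp only [if_pos hadj]
      exact tendsto_phi hp hpt ((hyi i).sub (hyi j))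
    · simp only [if_neg hadj]; exact tendsto_const_nhds
  have hR : Tendsto (fun k => lk k * (G.degree i : ℝ) * (|yk k i| ^ (pk k - 2) * yk k i)) atTop
      (𝓝 (lam * (G.degree i : ℝ) * (|y i| ^ (p - 2) * y i))) :=
    (hlt.mul tendsto_const_nhds).mul (tendsto_phi hp hpt (hyi i))
  refine tendsto_nhds_unique (hL.congr' ?_) hR
  filter_upwards [heig] with k hk using hk.2 i

private lemma eig1_limit {n : ℕ} (G : SimpleGraph (Fin n)) [DecidableRel G.Adj]
    {lam : ℝ} {lk : ℕ → ℝ} {yk : ℕ → Fin n → ℝ} {y : Fin n → ℝ}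
    (hlt : Tendsto lk atTop (𝓝 lam)) (hyt : Tendsto yk atTop (𝓝 y)) (hy0 : y ≠ 0)
    (heig : ∀ k, IsEigenpair1 G (lk k) (yk k)) : IsEigenpair1 G lam y := by
  choose zk hz1 hz2 hz3 using fun k => (heig k).2
  have hsk : ∀ k i, ∃ s, s ∈ Sgn (yk k i) ∧
      (∑ j : Fin n, if G.Adj i j then zk k i j else 0) = lk k * (G.degree i : ℝ) * s := by
    intro k i
    rcases hz3 k i with ⟨s, hs, he⟩
    exact ⟨s, hs, he.symm⟩
  choose sk hs1 hs2 using hsk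
  set Zk : ℕ → Fin n → Fin n → ℝ := fun k i j => if G.Adj i j then zk k i j else 0 with hZkdef
  have hmem : ∀ k, Zk k ∈ Set.univ.pi
      (fun _ : Fin n => Set.univ.pi fun _ : Fin n => Set.Icc (-1:ℝ) 1) := by
    intro k
    rw [Set.mem_univ_pi]
    intro i
    rw [Set.mem_univ_pi]
    intro j
    by_cases h : G.Adj i j
    · simpa [Zk, h] using Sgn_subset _ (hz1 k i j h)
    · simp [Zk, h]
  obtain ⟨Z, -, φ1, hφ1, hZt⟩ := (isCompact_univ_pi fun _ : Fin n =>
    isCompact_univ_pi fun _ : Fin n => isCompact_Icc).tendsto_subseq hmem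
  have hmem2 : ∀ k, sk (φ1 k) ∈ Set.univ.pi fun _ : Fin n => Set.Icc (-1:ℝ) 1 := by
    intro k
    rw [Set.mem_univ_pi]
    exact fun i => Sgn_subset _ (hs1 (φ1 k) i)
  obtain ⟨S, -, φ2, hφ2, hSt⟩ :=
    (isCompact_univ_pi fun _ : Fin n => isCompact_Icc).tendsto_subseq hmem2
  set φ : ℕ → ℕ := φ1 ∘ φ2 with hφdef
  have hφ : StrictMono φ := hφ1.comp hφ2
  have hZc : ∀ i j, Tendsto (fun k => Zk (φ k) i j) atTop (𝓝 (Z i j)) := by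
    intro i j
    have := (hZt.comp hφ2.tendsto_atTop)
    exact tendsto_pi_nhds.1 (tendsto_pi_nhds.1 this i) j
  have hSc : ∀ i, Tendsto (fun k => sk (φ k) i) atTop (𝓝 (S i)) :=
    fun i => tendsto_pi_nhds.1 hSt i
  have hyφ := hyt.comp hφ.tendsto_atTop
  have hyi : ∀ j, Tendsto (fun k => yk (φ k) j) atTop (𝓝 (y j)) :=
    fun j => tendsto_pi_nhds.1 hyφ j
  have hlφ := hlt.comp hφ.tendsto_atTop
  refine ⟨hy0, Z, ?_, ?_, ?_⟩
  · intro i j hadj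
    refine mem_Sgn_limit (hZc i j) ((hyi i).sub (hyi j)) fun k => ?_
    simpa [Zk, hadj] using hz1 (φ k) i j hadj
  · intro i j hadj
    refine tendsto_nhds_unique (hZc i j) (Tendsto.congr (fun k => ?_) (hZc j i).neg)
    simp only [Zk, if_pos hadj, if_pos hadj.symm]
    rw [hz2 (φ k) i j hadj]
  · intro i
    have hLt : Tendsto (fun k => ∑ j : Fin n, if G.Adj i j then Zk (φ k) i j else 0) atTop
        (𝓝 (∑ j : Fin n, if G.Adj i j then Z i j else 0)) := by
      apply tendsto_finset_sum
      intro j _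
      by_cases h : G.Adj i j
      · simp only [if_pos h]; exact hZc i j
      · simp only [if_neg h]; exact tendsto_const_nhds
    have hRt : Tendsto (fun k => lk (φ k) * (G.degree i : ℝ) * sk (φ k) i) atTop
        (𝓝 (lam * (G.degree i : ℝ) * S i)) :=
      (hlφ.mul tendsto_const_nhds).mul (hSc i)
    have heqk : ∀ k, (∑ j : Fin n, if G.Adj i j then Zk (φ k) i j else 0)
        = lk (φ k) * (G.degree i : ℝ) * sk (φ k) i := by
      intro k
      rw [← hs2 (φ k) i]
      refine Finset.sum_congr rfl fun j _ => ?_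
      by_cases h : G.Adj i j <;> simp [Zk, h]
    have hfin : (∑ j : Fin n, if G.Adj i j then Z i j else 0)
        = lam * (G.degree i : ℝ) * S i :=
      tendsto_nhds_unique hLt (Tendsto.congr (fun k => (heqk k).symm) hRt)
    exact ⟨S i, mem_Sgn_limit (hSc i) (hyi i) (fun k => hs1 (φ k) i), hfin.symm⟩

private lemma eig1_limit_of_gt {n : ℕ} (G : SimpleGraph (Fin n)) [DecidableRel G.Adj]
    {lam : ℝ} {pk lk : ℕ → ℝ} {yk : ℕ → Fin n → ℝ} {y : Fin n → ℝ}
    (hp1 : ∀ k, 1 < pk k) (hp2 : ∀ k, pk k ≤ 2) (hpt : Tendsto pk atTop (𝓝 1))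
    (hlt : Tendsto lk atTop (𝓝 lam)) (hyt : Tendsto yk atTop (𝓝 y)) (hy0 : y ≠ 0)
    (hnorm : ∀ k, ‖yk k‖ = 1)
    (heig : ∀ k, IsEigenpairP G (pk k) (lk k) (yk k)) : IsEigenpair1 G lam y := by
  have hyb : ∀ k i, |yk k i| ≤ 1 := by
    intro k i
    have := norm_le_pi_norm (yk k) i
    rwa [hnorm k, Real.norm_eq_abs] at this
  have hdb : ∀ k i j, |yk k i - yk k j| ≤ 2 := by
    intro k i j
    calc |yk k i - yk k j| ≤ |yk k i| + |yk k j| := abs_sub _ _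
    _ ≤ 2 := by linarith [hyb k i, hyb k j]
  set Zk : ℕ → Fin n → Fin n → ℝ := fun k i j =>
    if G.Adj i j then |yk k i - yk k j| ^ (pk k - 2) * (yk k i - yk k j) else 0 with hZkdef
  set sk : ℕ → Fin n → ℝ := fun k i => |yk k i| ^ (pk k - 2) * yk k i with hskdef
  have hmem : ∀ k, Zk k ∈ Set.univ.pi
      (fun _ : Fin n => Set.univ.pi fun _ : Fin n => Set.Icc (-2:ℝ) 2) := by
    intro k
    rw [Set.mem_univ_pi]
    intro i
    rw [Set.mem_univ_pi]
    intro j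
    rw [Set.mem_Icc, ← abs_le]
    by_cases h : G.Adj i j
    · simp only [Zk, if_pos h]
      calc abs (|yk k i - yk k j| ^ (pk k - 2) * (yk k i - yk k j))
          ≤ (2:ℝ) ^ (pk k - 1) := abs_phi_le (hdb k i j) (by linarith [hp1 k])
      _ ≤ (2:ℝ) ^ (1:ℝ) := Real.rpow_le_rpow_of_exponent_le one_le_two (by linarith [hp2 k])
      _ = 2 := Real.rpow_one 2
    · simp [Zk, h]
  obtain ⟨Z, -, φ1, hφ1, hZt⟩ := (isCompact_univ_pi fun _ : Fin n =>
    isCompact_univ_pi fun _ : Fin n => isCompact_Icc).tendsto_subseq hmem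
  have hmem2 : ∀ k, sk (φ1 k) ∈ Set.univ.pi fun _ : Fin n => Set.Icc (-1:ℝ) 1 := by
    intro k
    rw [Set.mem_univ_pi]
    intro i
    rw [Set.mem_Icc, ← abs_le]
    calc abs (|yk (φ1 k) i| ^ (pk (φ1 k) - 2) * yk (φ1 k) i)
        ≤ (1:ℝ) ^ (pk (φ1 k) - 1) := abs_phi_le (hyb (φ1 k) i) (by linarith [hp1 (φ1 k)])
    _ = 1 := Real.one_rpow _
  obtain ⟨S, -, φ2, hφ2, hSt⟩ :=
    (isCompact_univ_pi fun _ : Fin n => isCompact_Icc).tendsto_subseq hmem2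
  set φ : ℕ → ℕ := φ1 ∘ φ2 with hφdef
  have hφ : StrictMono φ := hφ1.comp hφ2
  have hZc : ∀ i j, Tendsto (fun k => Zk (φ k) i j) atTop (𝓝 (Z i j)) := by
    intro i j
    exact tendsto_pi_nhds.1 (tendsto_pi_nhds.1 (hZt.comp hφ2.tendsto_atTop) i) j
  have hSc : ∀ i, Tendsto (fun k => sk (φ k) i) atTop (𝓝 (S i)) :=
    fun i => tendsto_pi_nhds.1 hSt i
  have hyi : ∀ j, Tendsto (fun k => yk (φ k) j) atTop (𝓝 (y j)) :=
    fun j => tendsto_pi_nhds.1 (hyt.comp hφ.tendsto_atTop) j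
  have hlφ := hlt.comp hφ.tendsto_atTop
  have hpφ := hpt.comp hφ.tendsto_atTop
  refine ⟨hy0, Z, ?_, ?_, ?_⟩
  · intro i j hadj
    refine mem_Sgn_of_tendsto (fun k => hp1 (φ k)) hpφ ((hyi i).sub (hyi j))
      (fun k => hdb (φ k) i j) (fun k => ?_) (hZc i j)
    simp [Zk, hadj]
  · intro i j hadj
    refine tendsto_nhds_unique (hZc i j) (Tendsto.congr (fun k => ?_) (hZc j i).neg)
    simp only [Zk, if_pos hadj, if_pos hadj.symm]
    rw [abs_sub_comm]
    ring
  · intro i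
    have hLt : Tendsto (fun k => ∑ j : Fin n, if G.Adj i j then Zk (φ k) i j else 0) atTop
        (𝓝 (∑ j : Fin n, if G.Adj i j then Z i j else 0)) := by
      apply tendsto_finset_sum
      intro j _
      by_cases h : G.Adj i j
      · simp only [if_pos h]; exact hZc i j
      · simp only [if_neg h]; exact tendsto_const_nhds
    have hRt : Tendsto (fun k => lk (φ k) * (G.degree i : ℝ) * sk (φ k) i) atTop
        (𝓝 (lam * (G.degree i : ℝ) * S i)) :=
      (hlφ.mul tendsto_const_nhds).mul (hSc i)
    have heqk : ∀ k, (∑ j : Fin n, if G.Adj i j then Zk (φ k) i j else 0)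
        = lk (φ k) * (G.degree i : ℝ) * sk (φ k) i := by
      intro k
      rw [← (heig (φ k)).2 i]
      refine Finset.sum_congr rfl fun j _ => ?_
      by_cases h : G.Adj i j <;> simp [Zk, h]
    have hfin : (∑ j : Fin n, if G.Adj i j then Z i j else 0)
        = lam * (G.degree i : ℝ) * S i :=
      tendsto_nhds_unique hLt (Tendsto.congr (fun k => (heqk k).symm) hRt)
    refine ⟨S i, ?_, hfin.symm⟩
    exact mem_Sgn_of_tendsto (fun k => hp1 (φ k)) hpφ (hyi i)
      (fun k => le_trans (hyb (φ k) i) one_le_two) (fun k => rfl) (hSc i)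

private lemma eig_limit {n : ℕ} (G : SimpleGraph (Fin n)) [DecidableRel G.Adj]
    {p lam : ℝ} (hp : 1 ≤ p)
    {pk lk : ℕ → ℝ} {yk : ℕ → Fin n → ℝ} {y : Fin n → ℝ}
    (hpk : ∀ k, 1 ≤ pk k)
    (hpt : Tendsto pk atTop (𝓝 p)) (hlt : Tendsto lk atTop (𝓝 lam))
    (hyt : Tendsto yk atTop (𝓝 y)) (hnorm : ∀ k, ‖yk k‖ = 1) (hy : ‖y‖ = 1)
    (heig : ∀ k, IsEigenpair G (pk k) (lk k) (yk k)) :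
    IsEigenpair G p lam y := by
  have hy0 : y ≠ 0 := by
    intro h
    rw [h] at hy
    simp at hy
  rcases eq_or_lt_of_le hp with hp1 | hp1
  · -- p = 1
    left
    refine ⟨hp1.symm, ?_⟩
    rw [← hp1] at hpt
    by_cases hfreq : ∃ᶠ k in atTop, pk k = 1
    · obtain ⟨φ, hφ, hφ1⟩ := Filter.extraction_of_frequently_atTop hfreq
      refine eig1_limit G (hlt.comp hφ.tendsto_atTop) (hyt.comp hφ.tendsto_atTop) hy0
        fun k => ?_
      rcases heig (φ k) with ⟨_, h⟩ | ⟨h1, _⟩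
      · exact h
      · exact absurd (hφ1 k) (ne_of_gt h1)
    · have hev : ∀ᶠ k in atTop, 1 < pk k ∧ pk k ≤ 2 := by
        have h1 : ∀ᶠ k in atTop, ¬ pk k = 1 := Filter.not_frequently.1 hfreq
        have h2 : ∀ᶠ k in atTop, pk k < 2 := hpt.eventually (eventually_lt_nhds one_lt_two)
        filter_upwards [h1, h2] with k hk1 hk2
        exact ⟨lt_of_le_of_ne (hpk k) (Ne.symm hk1), hk2.le⟩
      obtain ⟨φ, hφ, hφ1⟩ := Filter.extraction_of_frequently_atTop hev.frequently
      refine eig1_limit_of_gt G (fun k => (hφ1 k).1) (fun k => (hφ1 k).2)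
        (hpt.comp hφ.tendsto_atTop) (hlt.comp hφ.tendsto_atTop)
        (hyt.comp hφ.tendsto_atTop) hy0 (fun k => hnorm (φ k)) fun k => ?_
      rcases heig (φ k) with ⟨h1, _⟩ | ⟨_, h⟩
      · exact absurd h1 (ne_of_gt (hφ1 k).1)
      · exact h
  · right
    refine ⟨hp1, ?_⟩
    have hev : ∀ᶠ k in atTop, IsEigenpairP G (pk k) (lk k) (yk k) := by
      filter_upwards [hpt.eventually (eventually_gt_nhds hp1)] with k hk
      rcases heig k with ⟨h1, _⟩ | ⟨_, h⟩
      · exact absurd h1 (ne_of_gt hk)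
      · exact h
    exact eigP_limit G hp1 hpt hlt hyt hy0 hev

/-- **Upper semi-continuity of `(p,λ) ↦ Ŝ_λ(Δ_p)`.** -/
theorem stmt13 {n : ℕ} (G : SimpleGraph (Fin n)) [DecidableRel G.Adj]
    (hdeg : ∀ i, 0 < G.degree i) (p lam : ℝ) (hp : 1 ≤ p) (hlam : 0 ≤ lam)
    (ε : ℝ) (hε : 0 < ε) :
    ∃ δ : ℝ, 0 < δ ∧ ∀ p' lam' : ℝ, 1 ≤ p' → 0 ≤ lam' →
      |p' - p| < δ → |lam' - lam| < δ →
      ∀ y ∈ hatS G p' lam', ∃ x ∈ hatS G p lam,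
        Real.sqrt (∑ i : Fin n, (y i - x i) ^ 2) < ε := by
  by_contra hcon
  push_neg at hcon
  have H : ∀ k : ℕ, ∃ (p' lam' : ℝ) (y : Fin n → ℝ), 1 ≤ p' ∧ 0 ≤ lam' ∧
      |p' - p| < 1 / (k + 1) ∧ |lam' - lam| < 1 / (k + 1) ∧ y ∈ hatS G p' lam' ∧
      ∀ x ∈ hatS G p lam, ε ≤ Real.sqrt (∑ i : Fin n, (y i - x i) ^ 2) := by
    intro k
    obtain ⟨p', lam', h1, h2, h3, h4, y, hy, hfar⟩ := hcon (1 / (k + 1)) (by positivity)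
    exact ⟨p', lam', y, h1, h2, h3, h4, hy, hfar⟩
  choose pk lk yk h1 h2 h3 h4 h5 h6 using H
  have hauxtend : ∀ (u : ℕ → ℝ) (c : ℝ), (∀ k, |u k - c| < 1 / (k + 1 : ℝ)) →
      Tendsto u atTop (𝓝 c) := by
    intro u c h
    rw [tendsto_iff_dist_tendsto_zero]
    refine squeeze_zero (fun k => dist_nonneg) (fun k => ?_)
      tendsto_one_div_add_atTop_nhds_zero_nat
    rw [Real.dist_eq]
    exact (h k).le
  have hsph : ∀ k, yk k ∈ Metric.sphere (0 : Fin n → ℝ) 1 := fun k => by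
    simpa [mem_sphere_zero_iff_norm] using (h5 k).1
  obtain ⟨y, hy, φ, hφ, hyt⟩ := (isCompact_sphere (0 : Fin n → ℝ) 1).tendsto_subseq hsph
  have hy1 : ‖y‖ = 1 := by simpa [mem_sphere_zero_iff_norm] using hy
  have heig : IsEigenpair G p lam y :=
    eig_limit G hp (fun k => h1 (φ k))
      ((hauxtend pk p h3).comp hφ.tendsto_atTop)
      ((hauxtend lk lam h4).comp hφ.tendsto_atTop)
      hyt (fun k => (h5 (φ k)).1) hy1 (fun k => (h5 (φ k)).2)
  have hyS : y ∈ hatS G p lam := ⟨hy1, heig⟩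
  have hfar : ∀ k, ε ≤ Real.sqrt (∑ i : Fin n, (yk (φ k) i - y i) ^ 2) :=
    fun k => h6 (φ k) y hyS
  have hsum : Tendsto (fun k => ∑ i : Fin n, (yk (φ k) i - y i) ^ 2) atTop (𝓝 0) := by
    have : Tendsto (fun k => ∑ i : Fin n, (yk (φ k) i - y i) ^ 2) atTop
        (𝓝 (∑ i : Fin n, (y i - y i) ^ 2)) := by
      apply tendsto_finset_sum
      intro i _
      exact ((tendsto_pi_nhds.1 hyt i).sub tendsto_const_nhds).pow 2
    simpa using this
  have h0 : Tendsto (fun k => Real.sqrt (∑ i : Fin n, (yk (φ k) i - y i) ^ 2)) atTop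
      (𝓝 0) := by
    have := (Real.continuous_sqrt.tendsto 0).comp hsum
    simpa [Function.comp_def] using this
  linarith [ge_of_tendsto' h0 hfar]
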